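/- For every real p ≥ 4 one has ∫_H |z₂|^{−p} dV(z) = ∞. Consequently, for every k ∈ ℕ and every p ≥ 4, the holomorphic function u(z₁,z₂) = 1/z₂ on H does not belong to the weighted Sobolev space W^{k,p}(H, δ^{kp}): its k-th derivative ∂^k u/∂z₂^k = ±k!/z₂^{k+1} satisfies ∫_H |∂^k u/∂z₂^k(z)|^p |z₂|^{kp} dV(z) = k!^p ∫_H |z₂|^{−p} dV(z) = ∞. -/

import Mathlib

open MeasureTheory Complex ComplexConjugate
open scoped ENNReal NNReal

noncomputable section

/-- The Hartogs triangle `H = {(z₁,z₂) : |z₁| < |z₂| < 1}`. -/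
def Hartogs : Set (ℂ × ℂ) := {z | ‖z.1‖ < ‖z.2‖ ∧ ‖z.2‖ < 1}

/-- Wirtinger derivative `∂/∂z₁`. -/
def dz1 (f : ℂ × ℂ → ℂ) : ℂ × ℂ → ℂ := fun z =>
  (1/2) * (fderiv ℝ f z (1, 0) - Complex.I * fderiv ℝ f z (Complex.I, 0))

/-- Wirtinger derivative `∂/∂z₂`. -/
def dz2 (f : ℂ × ℂ → ℂ) : ℂ × ℂ → ℂ := fun z =>
  (1/2) * (fderiv ℝ f z (0, 1) - Complex.I * fderiv ℝ f z (0, Complex.I))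

/-- Wirtinger derivative `∂/∂z̄₁`. -/
def dzb1 (f : ℂ × ℂ → ℂ) : ℂ × ℂ → ℂ := fun z =>
  (1/2) * (fderiv ℝ f z (1, 0) + Complex.I * fderiv ℝ f z (Complex.I, 0))

/-- Wirtinger derivative `∂/∂z̄₂`. -/
def dzb2 (f : ℂ × ℂ → ℂ) : ℂ × ℂ → ℂ := fun z =>
  (1/2) * (fderiv ℝ f z (0, 1) + Complex.I * fderiv ℝ f z (0, Complex.I))

/-- `D^α = ∂^{|α|}/∂z₁^{α₁}∂z₂^{α₂}∂z̄₁^{α₃}∂z̄₂^{α₄}`. -/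
def Dop (α : ℕ × ℕ × ℕ × ℕ) (f : ℂ × ℂ → ℂ) : ℂ × ℂ → ℂ :=
  dz1^[α.1] (dz2^[α.2.1] (dzb1^[α.2.2.1] (dzb2^[α.2.2.2] f)))

/-- Multi-indices `α = (α₁,α₂,α₃,α₄)` with `|α| ≤ k`. -/
def multiIdx (k : ℕ) : Finset (ℕ × ℕ × ℕ × ℕ) :=
  (Finset.range (k+1) ×ˢ Finset.range (k+1) ×ˢ Finset.range (k+1) ×ˢ Finset.range (k+1)).filter
    (fun α => α.1 + α.2.1 + α.2.2.1 + α.2.2.2 ≤ k)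

lemma hasFDerivAt_aux (c : ℂ) (m : ℕ) {z : ℂ × ℂ} (hz : z.2 ≠ 0) :
    HasFDerivAt (𝕜 := ℝ) (fun ζ : ℂ × ℂ => c * (ζ.2 ^ (m+1))⁻¹)
      ((ContinuousLinearMap.smulRight (1 : ℂ →L[ℂ] ℂ)
        (c * (-(↑(m+1) * z.2 ^ m) / (z.2 ^ (m+1)) ^ 2))).comp
          (ContinuousLinearMap.snd ℂ ℂ ℂ) |>.restrictScalars ℝ) z := by
  have h1 : HasDerivAt (fun w : ℂ => c * (w ^ (m+1))⁻¹)
      (c * (-(↑(m+1) * z.2 ^ m) / (z.2 ^ (m+1)) ^ 2)) z.2 := by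
    exact ((hasDerivAt_pow (m+1) z.2).inv (pow_ne_zero _ hz)).const_mul c
  have h2 := (hasDerivAt_iff_hasFDerivAt.1 h1).comp z
    (ContinuousLinearMap.snd ℂ ℂ ℂ).hasFDerivAt
  exact h2.restrictScalars ℝ

lemma dz2_iter_inv (k : ℕ) : ∀ z : ℂ × ℂ, z.2 ≠ 0 →
    dz2^[k] (fun ζ : ℂ × ℂ => (ζ.2)⁻¹) z = (-1) ^ k * (k.factorial : ℂ) / z.2 ^ (k + 1) := by
  induction k with
  | zero => intro z hz; simp
  | succ k ih =>
    intro z hz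
    rw [Function.iterate_succ_apply']
    have hU : IsOpen {ζ : ℂ × ℂ | ζ.2 ≠ 0} :=
      isOpen_compl_singleton.preimage continuous_snd
    have hev : dz2^[k] (fun ζ : ℂ × ℂ => (ζ.2)⁻¹) =ᶠ[nhds z]
        (fun ζ : ℂ × ℂ => ((-1) ^ k * (k.factorial : ℂ)) * (ζ.2 ^ (k+1))⁻¹) := by
      filter_upwards [hU.mem_nhds hz] with ζ hζ
      rw [ih ζ hζ, div_eq_mul_inv]
    have hfd := (hasFDerivAt_aux ((-1) ^ k * (k.factorial : ℂ)) k hz).fderiv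
    have hkey : fderiv ℝ (dz2^[k] (fun ζ : ℂ × ℂ => (ζ.2)⁻¹)) z
        = fderiv ℝ (fun ζ : ℂ × ℂ => ((-1) ^ k * (k.factorial : ℂ)) * (ζ.2 ^ (k+1))⁻¹) z :=
      hev.fderiv_eq
    set d : ℂ := ((-1) ^ k * (k.factorial : ℂ)) * (-(↑(k+1) * z.2 ^ k) / (z.2 ^ (k+1)) ^ 2) with hd
    have happ : ∀ w : ℂ, fderiv ℝ (dz2^[k] (fun ζ : ℂ × ℂ => (ζ.2)⁻¹)) z (0, w) = d * w := by
      intro w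
      rw [hkey, hfd]
      simp [mul_comm]
    show (1/2 : ℂ) * (_ - _) = _
    rw [happ 1, happ Complex.I]
    have : (1/2 : ℂ) * (d * 1 - Complex.I * (d * Complex.I)) = d := by
      have h := Complex.I_mul_I
      ring_nf
      rw [Complex.I_sq]
      ring
    rw [this, hd]
    have hz1 : z.2 ^ (k+1) ≠ 0 := pow_ne_zero _ hz
    rw [Nat.factorial_succ]
    push_cast
    field_simp
    ring


lemma measurableSet_Hartogs : MeasurableSet Hartogs := by
  have : IsOpen Hartogs := by
    have h1 : IsOpen {z : ℂ × ℂ | ‖z.1‖ < ‖z.2‖} :=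
      isOpen_lt (continuous_norm.comp continuous_fst)
        (continuous_norm.comp continuous_snd)
    have h2 : IsOpen {z : ℂ × ℂ | ‖z.2‖ < 1} :=
      isOpen_lt (continuous_norm.comp continuous_snd) continuous_const
    exact h1.inter h2
  exact this.measurableSet

/-- the pieces -/
def Spiece (n : ℕ) : Set (ℂ × ℂ) :=
  Metric.ball (0:ℂ) ((1/2)^(n+2)) ×ˢ
    (Metric.ball (0:ℂ) ((1/2)^(n+1)) \ Metric.closedBall (0:ℂ) ((1/2)^(n+2)))

lemma Spiece_mem {n : ℕ} {z : ℂ × ℂ} (hz : z ∈ Spiece n) :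
    ‖z.1‖ < (1/2:ℝ)^(n+2) ∧ (1/2:ℝ)^(n+2) < ‖z.2‖ ∧
      ‖z.2‖ < (1/2:ℝ)^(n+1) := by
  obtain ⟨h1, h2, h3⟩ := hz
  simp only [Metric.mem_ball, Metric.mem_closedBall, dist_zero_right,
    not_le] at h1 h2 h3
  exact ⟨h1, h3, h2⟩

lemma Spiece_subset (n : ℕ) : Spiece n ⊆ Hartogs := by
  intro z hz
  obtain ⟨h1, h2, h3⟩ := Spiece_mem hz
  refine ⟨h1.trans h2, h3.trans_le ?_⟩
  calc (1/2:ℝ)^(n+1) ≤ (1/2:ℝ)^0 := by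
        apply pow_le_pow_of_le_one (by norm_num) (by norm_num) (Nat.zero_le _)
    _ = 1 := pow_zero _
  
lemma Spiece_measurable (n : ℕ) : MeasurableSet (Spiece n) :=
  measurableSet_ball.prod (measurableSet_ball.diff measurableSet_closedBall)

lemma Spiece_disjoint : Pairwise (Function.onFun Disjoint Spiece) := by
  have key : ∀ m n : ℕ, m < n → Disjoint (Spiece m) (Spiece n) := by
    intro m n hmn
    rw [Set.disjoint_left]
    intro z hm hn
    have h1 := (Spiece_mem hm).2.1
    have h2 := (Spiece_mem hn).2.2
    have : (1/2:ℝ)^(n+1) ≤ (1/2:ℝ)^(m+2) :=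
      pow_le_pow_of_le_one (by norm_num) (by norm_num) (by omega)
    linarith
  intro m n hmn
  rcases lt_or_gt_of_ne hmn with h | h
  · exact key m n h
  · exact (key n m h).symm

lemma Spiece_volume (n : ℕ) : volume (Spiece n) =
    ENNReal.ofReal (((1/2:ℝ)^(n+2))^2 * (((1/2:ℝ)^(n+1))^2 - ((1/2:ℝ)^(n+2))^2) * Real.pi^2) := by
  have hpi : ((NNReal.pi : ℝ≥0∞)) = ENNReal.ofReal Real.pi := by
    rw [← ENNReal.ofReal_coe_nnreal, NNReal.coe_real_pi]
  have hsub : Metric.closedBall (0:ℂ) ((1/2)^(n+2)) ⊆ Metric.ball (0:ℂ) ((1/2)^(n+1)) := by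
    apply Metric.closedBall_subset_ball
    apply pow_lt_pow_right_of_lt_one₀ (by norm_num) (by norm_num) (by omega)
  have hd : volume (Metric.ball (0:ℂ) ((1/2)^(n+1)) \ Metric.closedBall (0:ℂ) ((1/2)^(n+2)))
      = ENNReal.ofReal ((((1/2:ℝ)^(n+1))^2 - ((1/2:ℝ)^(n+2))^2) * Real.pi) := by
    rw [measure_diff hsub measurableSet_closedBall.nullMeasurableSet
      ((isCompact_closedBall _ _).measure_lt_top).ne,
      Complex.volume_ball, Complex.volume_closedBall, hpi,
      ← ENNReal.ofReal_pow (by positivity), ← ENNReal.ofReal_pow (by positivity),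
      ← ENNReal.ofReal_mul (by positivity), ← ENNReal.ofReal_mul (by positivity),
      ← ENNReal.ofReal_sub _ (by positivity), ← sub_mul]
  rw [Spiece, MeasureTheory.Measure.volume_eq_prod, Measure.prod_prod, hd, Complex.volume_ball, hpi,
    ← ENNReal.ofReal_pow (by positivity), ← ENNReal.ofReal_mul (by positivity),
    ← ENNReal.ofReal_mul (by positivity)]
  ring_nf

lemma lintegral_Spiece_lb {p : ℝ} (hp : 4 ≤ p) (n : ℕ) :
    ENNReal.ofReal (3 * Real.pi^2 / 16) ≤
      ∫⁻ z in Spiece n, ENNReal.ofReal (‖z.2‖ ^ (-p)) := by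
  have hb : (0:ℝ) < (1/2:ℝ)^(n+1) := by positivity
  have step1 : ∫⁻ _ in Spiece n, ENNReal.ofReal (((1/2:ℝ)^(n+1)) ^ (-p)) ≤
      ∫⁻ z in Spiece n, ENNReal.ofReal (‖z.2‖ ^ (-p)) := by
    apply lintegral_mono_ae
    rw [ae_restrict_iff' (Spiece_measurable n)]
    apply Filter.Eventually.of_forall
    intro z hz
    apply ENNReal.ofReal_le_ofReal
    obtain ⟨-, h2, h3⟩ := Spiece_mem hz
    exact Real.rpow_le_rpow_of_nonpos ((pow_pos (by norm_num) _).trans h2) h3.le (by linarith)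
  refine le_trans ?_ step1
  rw [setLIntegral_const, Spiece_volume,
    ← ENNReal.ofReal_mul (Real.rpow_nonneg (by positivity) _)]
  apply ENNReal.ofReal_le_ofReal
  have h1 : ((1/2:ℝ)^(n+1)) ^ (-(4:ℝ)) ≤ ((1/2:ℝ)^(n+1)) ^ (-p) :=
    Real.rpow_le_rpow_of_exponent_ge hb (by
      apply pow_le_one₀ <;> norm_num) (by linarith)
  have h2 : ((1/2:ℝ)^(n+1)) ^ (-(4:ℝ)) = (((1/2:ℝ)^(n+1))^(4:ℕ))⁻¹ := by
    rw [Real.rpow_neg hb.le]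
    rw [show (4:ℝ) = ((4:ℕ):ℝ) by norm_num, Real.rpow_natCast]
  have hvol0 : (0:ℝ) ≤ ((1/2:ℝ)^(n+2))^2 * (((1/2:ℝ)^(n+1))^2 - ((1/2:ℝ)^(n+2))^2) * Real.pi^2 := by
    have : ((1/2:ℝ)^(n+2))^2 ≤ ((1/2:ℝ)^(n+1))^2 := by
      apply pow_le_pow_left₀ (by positivity)
      apply pow_le_pow_of_le_one (by norm_num) (by norm_num) (by omega)
    exact mul_nonneg (mul_nonneg (sq_nonneg _) (sub_nonneg.2 this)) (sq_nonneg _)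
  calc 3 * Real.pi^2 / 16
      = (((1/2:ℝ)^(n+1))^(4:ℕ))⁻¹ *
        (((1/2:ℝ)^(n+2))^2 * (((1/2:ℝ)^(n+1))^2 - ((1/2:ℝ)^(n+2))^2) * Real.pi^2) := by
        have e1 : (1/2:ℝ)^(n+1) = (1/2:ℝ)^n * (1/2) := pow_succ _ _
        have e2 : (1/2:ℝ)^(n+2) = (1/2:ℝ)^n * (1/2) * (1/2) := by
          rw [pow_succ, pow_succ]
        have hb0 : (0:ℝ) < (1/2:ℝ)^n := by positivity
        rw [e1, e2]
        field_simp
        ring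
    _ ≤ _ := mul_le_mul_of_nonneg_right (le_of_eq_of_le h2.symm h1) hvol0

lemma lintegral_Hartogs_top {p : ℝ} (hp : 4 ≤ p) :
    ∫⁻ z in Hartogs, ENNReal.ofReal (‖z.2‖ ^ (-p)) = ⊤ := by
  have hsub : (⋃ n, Spiece n) ⊆ Hartogs := Set.iUnion_subset Spiece_subset
  have h1 : (⊤:ℝ≥0∞) ≤ ∫⁻ z in ⋃ n, Spiece n, ENNReal.ofReal (‖z.2‖ ^ (-p)) := by
    rw [lintegral_iUnion Spiece_measurable Spiece_disjoint]
    calc (⊤:ℝ≥0∞) = ∑' _ : ℕ, ENNReal.ofReal (3 * Real.pi^2 / 16) :=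
          (ENNReal.tsum_const_eq_top_of_ne_zero
            ((ENNReal.ofReal_pos.2 (by positivity)).ne')).symm
      _ ≤ _ := ENNReal.tsum_le_tsum (fun n => lintegral_Spiece_lb hp n)
  exact top_le_iff.mp (h1.trans (lintegral_mono_set hsub))


/-- for `p ≥ 4`, `∫_H |z₂|^{-p} dV = ∞`; consequently, for every `k`,
`u(z) = 1/z₂` is not in `W^{k,p}(H, δ^{kp})`: its `k`-th derivative `∂^k u/∂z₂^k = ±k!/z₂^{k+1}`
satisfies `∫_H |∂^k u/∂z₂^k|^p |z₂|^{kp} dV = k!^p ∫_H |z₂|^{-p} dV = ∞`. -/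
theorem inv_z2_not_in_weighted_sobolev :
    ∀ p : ℝ, 4 ≤ p →
      (∫⁻ z in Hartogs, ENNReal.ofReal (‖z.2‖ ^ (-p)) = ⊤) ∧
      ∀ k : ℕ,
        (∀ z ∈ Hartogs, dz2^[k] (fun ζ : ℂ × ℂ => (ζ.2)⁻¹) z =
          (-1) ^ k * (k.factorial : ℂ) / z.2 ^ (k + 1)) ∧
        (∫⁻ z in Hartogs,
          ENNReal.ofReal (‖dz2^[k] (fun ζ : ℂ × ℂ => (ζ.2)⁻¹) z‖ ^ p *
            ‖z.2‖ ^ ((k : ℝ) * p)) = ⊤) ∧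
        ¬ ((∫⁻ z in Hartogs, ∑ α ∈ multiIdx k,
            ENNReal.ofReal (‖Dop α (fun ζ : ℂ × ℂ => (ζ.2)⁻¹) z‖ ^ p *
              ‖z.2‖ ^ ((k : ℝ) * p))) < ⊤) := by
  intro p hp
  have hpnn : (0:ℝ) ≤ p := by linarith
  have hdiv := lintegral_Hartogs_top hp
  refine ⟨hdiv, fun k => ?_⟩
  have hderiv : ∀ z ∈ Hartogs, dz2^[k] (fun ζ : ℂ × ℂ => (ζ.2)⁻¹) z =
      (-1) ^ k * (k.factorial : ℂ) / z.2 ^ (k + 1) := by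
    intro z hz
    have hz2 : z.2 ≠ 0 := by
      intro h
      have h1 := (norm_nonneg z.1).trans_lt hz.1
      rw [h] at h1
      simp at h1
    exact dz2_iter_inv k z hz2
  have hpoint : ∀ z ∈ Hartogs,
      ENNReal.ofReal (‖z.2‖ ^ (-p)) ≤
        ENNReal.ofReal (‖dz2^[k] (fun ζ : ℂ × ℂ => (ζ.2)⁻¹) z‖ ^ p *
          ‖z.2‖ ^ ((k : ℝ) * p)) := by
    intro z hz
    have hr0 : 0 < ‖z.2‖ := (norm_nonneg z.1).trans_lt hz.1
    have habs : ‖dz2^[k] (fun ζ : ℂ × ℂ => (ζ.2)⁻¹) z‖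
        = (k.factorial : ℝ) / ‖z.2‖ ^ (k+1) := by
      rw [hderiv z hz]
      simp [norm_div, norm_pow, Complex.norm_natCast]
    rw [habs]
    set r := ‖z.2‖ with hrdef
    have e : ((k.factorial : ℝ) / r ^ (k+1)) ^ p * r ^ ((k:ℝ) * p)
        = (k.factorial : ℝ) ^ p * r ^ (-p) := by
      rw [Real.div_rpow (Nat.cast_nonneg _) (by positivity),
        ← Real.rpow_natCast r (k+1), ← Real.rpow_mul hr0.le,
        div_mul_eq_mul_div, mul_div_assoc, ← Real.rpow_sub hr0]
      congr 1
      push_cast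
      ring
    rw [e]
    apply ENNReal.ofReal_le_ofReal
    have h1 : (1:ℝ) ≤ (k.factorial : ℝ) ^ p := by
      have := Real.rpow_le_rpow (zero_le_one) (Nat.one_le_cast.mpr k.factorial_pos) hpnn
      rwa [Real.one_rpow] at this
    exact le_mul_of_one_le_left (Real.rpow_nonneg hr0.le _) h1
  have hint2 : (∫⁻ z in Hartogs,
      ENNReal.ofReal (‖dz2^[k] (fun ζ : ℂ × ℂ => (ζ.2)⁻¹) z‖ ^ p *
        ‖z.2‖ ^ ((k : ℝ) * p))) = ⊤ := by
    apply top_le_iff.mp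
    rw [← hdiv]
    apply lintegral_mono_ae
    rw [ae_restrict_iff' measurableSet_Hartogs]
    exact Filter.Eventually.of_forall hpoint
  refine ⟨hderiv, hint2, ?_⟩
  have hint3 : (∫⁻ z in Hartogs, ∑ α ∈ multiIdx k,
      ENNReal.ofReal (‖Dop α (fun ζ : ℂ × ℂ => (ζ.2)⁻¹) z‖ ^ p *
        ‖z.2‖ ^ ((k : ℝ) * p))) = ⊤ := by
    apply top_le_iff.mp
    rw [← hint2]
    apply lintegral_mono
    intro z
    have hm : ((0,k,0,0) : ℕ × ℕ × ℕ × ℕ) ∈ multiIdx k := by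
      simp [multiIdx]
    have := Finset.single_le_sum
      (f := fun α : ℕ × ℕ × ℕ × ℕ =>
        ENNReal.ofReal (‖Dop α (fun ζ : ℂ × ℂ => (ζ.2)⁻¹) z‖ ^ p *
          ‖z.2‖ ^ ((k : ℝ) * p)))
      (fun i _ => zero_le) hm
    exact this
  rw [hint3]
  exact lt_irrefl ⊤
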